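/- Monotonicity of vulnerability in shard count under the uniform model: if n' > n ≥ 2 and m ≥ 1, then the expected number of distinct shards involved in a transaction with m inputs is larger with n' shards than with n shards. -/

import Mathlib

lemma geom_rw (m : ℕ) (x : ℝ) (hx : 1 ≤ x) :
    x * (1 - ((x - 1) / x) ^ (m + 1))
      = ∑ i ∈ Finset.range (m + 1), ((x - 1) / x) ^ i := by
  have hx0 : (0:ℝ) < x := lt_of_lt_of_le one_pos hx
  have hr1 : (x - 1) / x ≠ 1 := by
    intro h
    have := (div_eq_one_iff_eq hx0.ne').mp h
    linarith
  rw [geom_sum_eq hr1]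
  have h1 : (x - 1) / x - 1 = -(1 / x) := by field_simp; ring
  rw [h1]
  field_simp
  ring

/-- For fixed `m ≥ 1`, the expected number of distinct shards involved in a
transaction with `m` inputs under the uniform model,
`g(n) = n·(1 - ((n-1)/n)^(m+1))`, is strictly increasing in the shard count:
if `n' > n ≥ 2` then `g(n) < g(n')`. -/
theorem stmt_13 (m n n' : ℕ) (hm : 1 ≤ m) (hn : 2 ≤ n) (hnn' : n < n') :
    (n : ℝ) * (1 - (((n : ℝ) - 1) / (n : ℝ)) ^ (m + 1))
      < (n' : ℝ) * (1 - (((n' : ℝ) - 1) / (n' : ℝ)) ^ (m + 1)) := by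
  have hn0 : (0:ℝ) < n := by positivity
  have hn'0 : (0:ℝ) < n' := by
    have : (0:ℕ) < n' := by omega
    exact_mod_cast this
  have hn1 : (1:ℝ) ≤ n := by exact_mod_cast Nat.one_le_of_lt hn
  have hn'1 : (1:ℝ) ≤ n' := by
    have : 1 ≤ n' := by omega
    exact_mod_cast this
  rw [geom_rw m _ hn1, geom_rw m _ hn'1]
  set r : ℝ := ((n:ℝ) - 1) / n with hr
  set r' : ℝ := ((n':ℝ) - 1) / n' with hr'
  have hrnn : 0 ≤ r := by
    apply div_nonneg _ hn0.le; linarith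
  have hlt : r < r' := by
    rw [hr, hr', div_lt_div_iff₀ hn0 hn'0]
    have hnn : (n:ℝ) < n' := by exact_mod_cast hnn'
    nlinarith
  apply Finset.sum_lt_sum
  · intro i _
    exact pow_le_pow_left₀ hrnn hlt.le i
  · refine ⟨1, Finset.mem_range.mpr (by omega), ?_⟩
    simpa using hlt
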